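/- With N, q, and the matrices M_U, M_V, M_W as in the context, let u, v, h be nonzero complex numbers with u^N ≠ −1 (so that the diagonal matrices 1 + q·M_U(u), 1 + q³·M_U(u), 1 + q·M_U(u)⁻¹, and 1 + q³·M_U(u)⁻¹ are all invertible). Define R_U := (1 + q·M_U(u)⁻¹)⁻¹·(1 + q³·M_U(u)⁻¹)⁻¹·M_W(u,v,h), R_V := (1 + q·M_U(u))·(1 + q³·M_U(u))·M_V(v), and R_W := M_U(u)⁻¹. Then R_V·R_U = q⁴·R_U·R_V, R_W·R_V = q⁴·R_V·R_W, R_U·R_W = q⁴·R_W·R_U, and q²·R_U·R_V·R_W = h·I, where I is the N×N identity matrix. -/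

import Mathlib

open Matrix

section aux
variable {N : ℕ} [NeZero N]

def shm (f : Fin N → ℂ) : Matrix (Fin N) (Fin N) ℂ :=
  Matrix.of fun i j => if j = i + 1 then f i else 0

def shmi (g : Fin N → ℂ) : Matrix (Fin N) (Fin N) ℂ :=
  Matrix.of fun i j => if i = j + 1 then g j else 0

lemma shm_mul_shmi (f g : Fin N → ℂ) :
    shm f * shmi g = Matrix.diagonal (fun i => f i * g i) := by
  ext i j
  simp only [Matrix.mul_apply, shm, shmi, Matrix.of_apply, Matrix.diagonal_apply]
  rw [Finset.sum_eq_single (i + 1)]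
  · simp only [if_pos rfl, add_left_inj]
    by_cases hij : i = j <;> simp [hij]
  · intro k _ hk; simp [if_neg (by exact fun hh => hk hh)]
  · intro hk; exact absurd (Finset.mem_univ _) hk

lemma shmi_mul_shm (f g : Fin N → ℂ) :
    shmi g * shm f = Matrix.diagonal (fun i => g (i - 1) * f (i - 1)) := by
  ext i j
  simp only [Matrix.mul_apply, shm, shmi, Matrix.of_apply, Matrix.diagonal_apply]
  rw [Finset.sum_eq_single (i - 1)]
  · rw [if_pos (by rw [sub_add_cancel])]
    by_cases hij : i = j
    · simp [hij, sub_add_cancel]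
    · rw [if_neg (fun hh => hij (by rw [sub_add_cancel] at hh; exact hh.symm)), if_neg hij,
        mul_zero]
  · intro k _ hk
    rw [if_neg, zero_mul]
    intro hh; exact hk (by rw [hh]; exact (add_sub_cancel_right k 1).symm)
  · intro hk; exact absurd (Finset.mem_univ _) hk

lemma diagonal_mul_shm (d f : Fin N → ℂ) :
    Matrix.diagonal d * shm f = shm (fun i => d i * f i) := by
  ext i j; rw [Matrix.diagonal_mul]; simp [shm, mul_ite]

lemma shm_mul_diagonal (d f : Fin N → ℂ) :
    shm f * Matrix.diagonal d = shm (fun i => f i * d (i + 1)) := by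
  ext i j; rw [Matrix.mul_diagonal]
  simp only [shm, Matrix.of_apply, ite_mul, zero_mul]
  split_ifs with hh
  · rw [hh]
  · rfl

lemma diagonal_mul_shmi (d g : Fin N → ℂ) :
    Matrix.diagonal d * shmi g = shmi (fun j => d (j + 1) * g j) := by
  ext i j; rw [Matrix.diagonal_mul]
  simp only [shmi, Matrix.of_apply, mul_ite, mul_zero]
  split_ifs with hh
  · rw [hh]
  · rfl

lemma shmi_mul_diagonal (d g : Fin N → ℂ) :
    shmi g * Matrix.diagonal d = shmi (fun j => g j * d j) := by
  ext i j; rw [Matrix.mul_diagonal]; simp [shmi, ite_mul]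

end aux

/-- The image of the generator `U` of the Chekhov–Fock algebra of the once-punctured torus
under the standard representation: the diagonal matrix with entries `u·q^{4i}`. -/
noncomputable def MU (N : ℕ) (q u : ℂ) : Matrix (Fin N) (Fin N) ℂ :=
  Matrix.diagonal fun i => u * q ^ (4 * (i : ℕ))

/-- The image of the generator `V`: the cyclic shift matrix with entries `v`. -/
noncomputable def MV (N : ℕ) (v : ℂ) : Matrix (Fin N) (Fin N) ℂ :=
  Matrix.of fun i j => if (j : ℕ) = ((i : ℕ) + 1) % N then v else 0

/-- The image of the generator `W`: `q⁻²·h·(M_U(u)·M_V(v))⁻¹`. -/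
noncomputable def MW (N : ℕ) (q u v h : ℂ) : Matrix (Fin N) (Fin N) ℂ :=
  ((q ^ 2)⁻¹ * h) • (MU N q u * MV N v)⁻¹

/-- The images `R_U, R_V, R_W` of `U, V, W` under `χ_{u,v,h} ∘ ℛ` again satisfy the
Chekhov–Fock relations, with the same central element `q²·R_U·R_V·R_W = h`. -/
theorem stmt6 (N : ℕ) (hN : Odd N) (hNpos : 0 < N) (q : ℂ) (hq : IsPrimitiveRoot q N)
    (u v h : ℂ) (hu : u ≠ 0) (hv : v ≠ 0) (hh : h ≠ 0) (hun : u ^ N ≠ -1)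
    (RU RV RW : Matrix (Fin N) (Fin N) ℂ)
    (hRU : RU = (1 + q • (MU N q u)⁻¹)⁻¹ * (1 + q ^ 3 • (MU N q u)⁻¹)⁻¹ * MW N q u v h)
    (hRV : RV = (1 + q • MU N q u) * (1 + q ^ 3 • MU N q u) * MV N v)
    (hRW : RW = (MU N q u)⁻¹) :
    RV * RU = q ^ 4 • (RU * RV) ∧
    RW * RV = q ^ 4 • (RV * RW) ∧
    RU * RW = q ^ 4 • (RW * RU) ∧
    q ^ 2 • (RU * RV * RW) = h • (1 : Matrix (Fin N) (Fin N) ℂ) := by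
  haveI : NeZero N := ⟨hNpos.ne'⟩
  have hqN : q ^ N = 1 := hq.pow_eq_one
  have hq0 : q ≠ 0 := hq.ne_zero hNpos.ne'
  set d : Fin N → ℂ := fun i => u * q ^ (4 * (i : ℕ)) with hd
  have hd0 : ∀ i, d i ≠ 0 := fun i => mul_ne_zero hu (pow_ne_zero _ hq0)
  -- the fundamental non-degeneracy fact
  have hgen : ∀ m k : ℕ, u * q ^ m + q ^ k ≠ 0 := by
    intro m k hcon
    apply hun
    have hu' : u = -q ^ k * (q ^ m)⁻¹ := by
      field_simp
      linear_combination hcon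
    rw [hu', mul_pow, inv_pow, neg_pow, ← pow_mul, ← pow_mul, mul_comm k N, mul_comm m N,
      pow_mul, pow_mul, hqN, one_pow, one_pow, inv_one, hN.neg_one_pow]
    ring
  have hkey : ∀ (i : Fin N) (k : ℕ), 1 + q ^ k * (d i)⁻¹ ≠ 0 := by
    intro i k hcon
    apply hgen (4 * (i : ℕ)) k
    have e : u * q ^ (4 * (i : ℕ)) + q ^ k = (1 + q ^ k * (d i)⁻¹) * d i := by
      field_simp [hd]
      rfl
    rw [e, hcon, zero_mul]
  have hval : ∀ i : Fin N, ((i + 1 : Fin N) : ℕ) = ((i : ℕ) + 1) % N := by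
    intro i
    rw [Fin.add_def]
    show ((i : ℕ) + ((1 : Fin N) : ℕ)) % N = _
    rw [Fin.val_one']
    conv_rhs => rw [Nat.add_mod]
    rw [Nat.mod_eq_of_lt i.is_lt]
  have hpowmod : ∀ m : ℕ, q ^ (m % N) = q ^ m := by
    intro m
    conv_rhs => rw [← Nat.mod_add_div m N, pow_add, pow_mul, hqN, one_pow, mul_one]
  have hdsucc : ∀ i : Fin N, d (i + 1) = q ^ 4 * d i := by
    intro i
    show u * q ^ (4 * ((i + 1 : Fin N) : ℕ)) = q ^ 4 * (u * q ^ (4 * (i : ℕ)))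
    rw [hval, mul_comm 4 (((i : ℕ) + 1) % N), pow_mul, hpowmod, ← pow_mul,
      mul_comm ((i : ℕ) + 1) 4, Nat.mul_add, pow_add]
    ring
  -- matrix building blocks
  have hMU : MU N q u = Matrix.diagonal d := rfl
  have hMUinv : (MU N q u)⁻¹ = Matrix.diagonal (fun i => (d i)⁻¹) := by
    apply Matrix.inv_eq_right_inv
    rw [hMU, Matrix.diagonal_mul_diagonal,
      show (fun i => d i * (d i)⁻¹) = fun _ => (1 : ℂ) from
        funext fun i => mul_inv_cancel₀ (hd0 i), Matrix.diagonal_one]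
  have hMV : MV N v = shm (fun _ => v) := by
    ext i j
    simp only [MV, shm, Matrix.of_apply]
    by_cases hc : j = i + 1
    · rw [if_pos (by rw [hc, hval]), if_pos hc]
    · rw [if_neg (fun hcc => hc (Fin.ext (by rw [hcc, hval]))), if_neg hc]
  have e1' : 1 + q • MU N q u = Matrix.diagonal (fun i => 1 + q * d i) := by
    ext i j
    by_cases hij : i = j
    · subst hij; simp [Matrix.smul_apply, hMU]
    · simp [Matrix.smul_apply, hMU, Matrix.diagonal_apply_ne _ hij, Matrix.one_apply_ne hij]
  have e3' : 1 + q ^ 3 • MU N q u = Matrix.diagonal (fun i => 1 + q ^ 3 * d i) := by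
    ext i j
    by_cases hij : i = j
    · subst hij; simp [Matrix.smul_apply, hMU]
    · simp [Matrix.smul_apply, hMU, Matrix.diagonal_apply_ne _ hij, Matrix.one_apply_ne hij]
  have e1 : 1 + q • (MU N q u)⁻¹ = Matrix.diagonal (fun i => 1 + q * (d i)⁻¹) := by
    ext i j
    by_cases hij : i = j
    · subst hij; simp [Matrix.smul_apply, hMUinv]
    · simp [Matrix.smul_apply, hMUinv, Matrix.diagonal_apply_ne _ hij, Matrix.one_apply_ne hij]
  have e3 : 1 + q ^ 3 • (MU N q u)⁻¹ = Matrix.diagonal (fun i => 1 + q ^ 3 * (d i)⁻¹) := by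
    ext i j
    by_cases hij : i = j
    · subst hij; simp [Matrix.smul_apply, hMUinv]
    · simp [Matrix.smul_apply, hMUinv, Matrix.diagonal_apply_ne _ hij, Matrix.one_apply_ne hij]
  have hk1 : ∀ i, 1 + q * (d i)⁻¹ ≠ 0 := by
    intro i; have := hkey i 1; rwa [pow_one] at this
  have hk3 : ∀ i, 1 + q ^ 3 * (d i)⁻¹ ≠ 0 := fun i => hkey i 3
  have hP1 : (1 + q • (MU N q u)⁻¹)⁻¹ = Matrix.diagonal (fun i => (1 + q * (d i)⁻¹)⁻¹) := by
    rw [e1]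
    apply Matrix.inv_eq_right_inv
    rw [Matrix.diagonal_mul_diagonal,
      show (fun i => (1 + q * (d i)⁻¹) * (1 + q * (d i)⁻¹)⁻¹) = fun _ => (1 : ℂ) from
        funext fun i => mul_inv_cancel₀ (hk1 i), Matrix.diagonal_one]
  have hP3 : (1 + q ^ 3 • (MU N q u)⁻¹)⁻¹ =
      Matrix.diagonal (fun i => (1 + q ^ 3 * (d i)⁻¹)⁻¹) := by
    rw [e3]
    apply Matrix.inv_eq_right_inv
    rw [Matrix.diagonal_mul_diagonal,
      show (fun i => (1 + q ^ 3 * (d i)⁻¹) * (1 + q ^ 3 * (d i)⁻¹)⁻¹) = fun _ => (1 : ℂ) from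
        funext fun i => mul_inv_cancel₀ (hk3 i), Matrix.diagonal_one]
  set c : ℂ := (q ^ 2)⁻¹ * h with hc
  have hABinv : (MU N q u * MV N v)⁻¹ = shmi (fun j => (d j * v)⁻¹) := by
    apply Matrix.inv_eq_right_inv
    rw [hMU, hMV, diagonal_mul_shm, shm_mul_shmi,
      show (fun i => d i * v * (d i * v)⁻¹) = fun _ => (1 : ℂ) from
        funext fun i => mul_inv_cancel₀ (mul_ne_zero (hd0 i) hv), Matrix.diagonal_one]
  have hMW : MW N q u v h = c • shmi (fun j => (d j * v)⁻¹) := by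
    show ((q ^ 2)⁻¹ * h) • (MU N q u * MV N v)⁻¹ = _
    rw [hABinv, hc]
  -- assembled forms
  set w : Fin N → ℂ :=
    fun j => (1 + q * (d (j + 1))⁻¹)⁻¹ * (1 + q ^ 3 * (d (j + 1))⁻¹)⁻¹ * (d j * v)⁻¹ with hw
  set g : Fin N → ℂ := fun i => (1 + q * d i) * (1 + q ^ 3 * d i) * v with hg
  have hRU' : RU = c • shmi w := by
    rw [hRU, hP1, hP3, hMW, Matrix.diagonal_mul_diagonal, Matrix.mul_smul, diagonal_mul_shmi]
  have hRV' : RV = shm g := by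
    rw [hRV, e1', e3', hMV, Matrix.diagonal_mul_diagonal, diagonal_mul_shm]
  have hRW' : RW = Matrix.diagonal (fun i => (d i)⁻¹) := by rw [hRW, hMUinv]
  -- the core scalar identity
  have hs1 : ∀ (i : Fin N) (k : ℕ), d i + q ^ k ≠ 0 := fun i k => hgen (4 * (i : ℕ)) k
  have core : ∀ j : Fin N, g j * w j = q ^ 4 * d j := by
    intro j
    have hdj := hd0 j
    have hq4d : q ^ 4 * d j ≠ 0 := mul_ne_zero (pow_ne_zero _ hq0) hdj
    have m1 : q ^ 4 * d j + q ≠ 0 := by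
      have := hs1 (j + 1) 1; rw [hdsucc, pow_one] at this; exact this
    have m3 : q ^ 4 * d j + q ^ 3 ≠ 0 := by
      have := hs1 (j + 1) 3; rw [hdsucc] at this; exact this
    rw [hw, hg]
    simp only
    rw [hdsucc j]
    have r1 : 1 + q * (q ^ 4 * d j)⁻¹ = (q ^ 4 * d j + q) * (q ^ 4 * d j)⁻¹ := by
      field_simp
    have r3 : 1 + q ^ 3 * (q ^ 4 * d j)⁻¹ = (q ^ 4 * d j + q ^ 3) * (q ^ 4 * d j)⁻¹ := by
      field_simp
    rw [r1, r3]
    have m1' : 1 + q ^ 3 * d j ≠ 0 := fun h0 => m1 (by linear_combination q * h0)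
    have m3' : 1 + q * d j ≠ 0 := fun h0 => m3 (by linear_combination q ^ 3 * h0)
    field_simp [m1, m3, m1', m3']
    have hX : 1 + q * d j + q ^ 3 * d j + q ^ 4 * d j ^ 2 ≠ 0 := fun h0 =>
      mul_ne_zero m3' m1' (by linear_combination h0)
    ring_nf
    field_simp [hX]
    ring
  have hRURV : RU * RV = c • Matrix.diagonal d := by
    rw [hRU', hRV', Matrix.smul_mul, shmi_mul_shm]
    ext i j
    by_cases hij : i = j
    · subst hij
      simp only [Matrix.smul_apply, Matrix.diagonal_apply_eq, smul_eq_mul]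
      have hcore := core (i - 1)
      have e := hdsucc (i - 1)
      rw [sub_add_cancel] at e
      linear_combination c * hcore - c * e
    · simp [Matrix.smul_apply, Matrix.diagonal_apply_ne _ hij]
  have hRVRU : RV * RU = (q ^ 4 * c) • Matrix.diagonal d := by
    rw [hRV', hRU', Matrix.mul_smul, shm_mul_shmi]
    ext i j
    by_cases hij : i = j
    · subst hij
      simp only [Matrix.smul_apply, Matrix.diagonal_apply_eq, smul_eq_mul]
      linear_combination c * core i
    · simp [Matrix.smul_apply, Matrix.diagonal_apply_ne _ hij]
  refine ⟨?_, ?_, ?_, ?_⟩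
  · rw [hRVRU, hRURV, smul_smul]
  · rw [hRW', hRV', diagonal_mul_shm, shm_mul_diagonal]
    ext i j
    simp only [shm, Matrix.of_apply, Matrix.smul_apply, smul_eq_mul]
    split_ifs with hij
    · rw [hdsucc i]
      have hdi := hd0 i
      field_simp
    · rw [mul_zero]
  · rw [hRU', hRW', Matrix.smul_mul, shmi_mul_diagonal, Matrix.mul_smul, diagonal_mul_shmi]
    ext i j
    simp only [shmi, Matrix.of_apply, Matrix.smul_apply, smul_eq_mul]
    split_ifs with hij
    · rw [hdsucc j]
      have hdj := hd0 j
      field_simp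
    · ring
  · rw [hRURV, hRW', Matrix.smul_mul, Matrix.diagonal_mul_diagonal,
      show (fun i => d i * (d i)⁻¹) = fun _ => (1 : ℂ) from
        funext fun i => mul_inv_cancel₀ (hd0 i), Matrix.diagonal_one, smul_smul,
      show q ^ 2 * c = h by rw [hc]; field_simp]
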